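/- The set of real roots is stable under translation by δ: for every α ∈ Δ̃_re and every n ∈ ℤ, α + nδ ∈ Δ̃_re, where Δ̃_re = {w(α_v) : w ∈ W̃_A, v ∈ Ṽ_A}. -/

import Mathlib

namespace AffineGRS

noncomputable section

/-- The vertex set `Ṽ_A` of the affine Coxeter--Dynkin diagram attached to a
triple `A = (a 0, a 1, a 2)`: it consists of `𝟙*`, `𝟙` and the branch vertices
`(i, j)` for `i ∈ {1,2,3}` and `1 ≤ j ≤ a i − 1` (coded by `Fin (a i - 1)`). -/
inductive Vt (a : Fin 3 → ℕ) : Type where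
  | star : Vt a
  | one  : Vt a
  | br   : (i : Fin 3) → Fin (a i - 1) → Vt a

def vtEquiv (a : Fin 3 → ℕ) : Vt a ≃ (Unit ⊕ Unit ⊕ (Σ i : Fin 3, Fin (a i - 1))) where
  toFun v :=
    match v with
    | Vt.star => Sum.inl ()
    | Vt.one => Sum.inr (Sum.inl ())
    | Vt.br i j => Sum.inr (Sum.inr ⟨i, j⟩)
  invFun x :=
    match x with
    | Sum.inl _ => Vt.star
    | Sum.inr (Sum.inl _) => Vt.one
    | Sum.inr (Sum.inr ⟨i, j⟩) => Vt.br i j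
  left_inv v := by cases v <;> rfl
  right_inv x := by rcases x with _ | (_ | ⟨i, j⟩) <;> rfl

instance (a : Fin 3 → ℕ) : DecidableEq (Vt a) := (vtEquiv a).decidableEq
instance (a : Fin 3 → ℕ) : Fintype (Vt a) := Fintype.ofEquiv _ (vtEquiv a).symm

/-- The entries `Ĩ(α_u, α_v)` of the Cartan form on the basis `{α_v : v ∈ Ṽ_A}`. -/
def cartan (a : Fin 3 → ℕ) : Vt a → Vt a → ℤ
  | Vt.star, Vt.star => 2
  | Vt.one, Vt.one => 2
  | Vt.star, Vt.one => 2
  | Vt.one, Vt.star => 2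
  | Vt.star, Vt.br _ j => if (j : ℕ) = 0 then -1 else 0
  | Vt.br _ j, Vt.star => if (j : ℕ) = 0 then -1 else 0
  | Vt.one, Vt.br _ j => if (j : ℕ) = 0 then -1 else 0
  | Vt.br _ j, Vt.one => if (j : ℕ) = 0 then -1 else 0
  | Vt.br i j, Vt.br i' j' =>
      if i = i' ∧ ((j : ℕ) = (j' : ℕ) + 1 ∨ (j' : ℕ) = (j : ℕ) + 1) then -1
      else if i = i' ∧ (j : ℕ) = (j' : ℕ) then 2 else 0

/-- The root lattice `L̃`: the free `ℤ`-module with basis `{α_v : v ∈ Ṽ_A}`. -/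
abbrev Lt (a : Fin 3 → ℕ) : Type := Vt a →₀ ℤ

/-- The basis vector `α_v ∈ L̃`. -/
def gen (a : Fin 3 → ℕ) (v : Vt a) : Lt a := Finsupp.single v 1

/-- The symmetric bilinear form `Ĩ` on `L̃`. -/
def Iform (a : Fin 3 → ℕ) (x y : Lt a) : ℤ :=
  x.sum fun u xu => y.sum fun v yv => xu * yv * cartan a u v

/-- `δ := α_{𝟙*} − α_𝟙`. -/
def delta (a : Fin 3 → ℕ) : Lt a := gen a Vt.star - gen a Vt.one

/-- The reflection `r_α(x) = x − Ĩ(α, x) α` (for `α` with `Ĩ(α,α) = 2`). -/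
def reflect (a : Fin 3 → ℕ) (α : Lt a) (x : Lt a) : Lt a := x - Iform a α x • α

/-- The composite `r_{α_{(i,1)}} ∘ r_{α_{(i,2)}} ∘ ⋯ ∘ r_{α_{(i, a i − 1)}}`. -/
def branchComp (a : Fin 3 → ℕ) (i : Fin 3) : Lt a → Lt a :=
  (List.finRange (a i - 1)).foldr (fun j f => reflect a (gen a (Vt.br i j)) ∘ f) id

/-- The Coxeter transformation
`c̃_A := r_{α_{𝟙*}} ∘ r_{α_𝟙} ∘ r_{α_{(1,1)}} ∘ ⋯ ∘ r_{α_{(3, a₃ − 1)}}`. -/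
def coxeter (a : Fin 3 → ℕ) : Lt a → Lt a :=
  reflect a (gen a Vt.star) ∘ reflect a (gen a Vt.one) ∘
    branchComp a 0 ∘ branchComp a 1 ∘ branchComp a 2

/-- A `ℤ`-bilinear form `χ` on `L̃` is an Euler form for `(L̃, Ĩ, c̃_A)` if
`Ĩ = χ + χᵀ` and `χ(λ, λ') = −χ(λ', c̃_A(λ))` (Serre duality). -/
def IsEulerForm (a : Fin 3 → ℕ) (χ : Lt a →ₗ[ℤ] Lt a →ₗ[ℤ] ℤ) : Prop :=
  (∀ x y : Lt a, Iform a x y = χ x y + χ y x) ∧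
  (∀ x y : Lt a, χ x y = - χ y (coxeter a x))

/-- The twist automorphism `t_δ(λ) = λ − χ(δ, λ) δ` (as a function). -/
def twist (a : Fin 3 → ℕ) (χ : Lt a →ₗ[ℤ] Lt a →ₗ[ℤ] ℤ) (x : Lt a) : Lt a :=
  x - χ (delta a) x • delta a

/-- The inverse of the twist automorphism, `λ ↦ λ + χ(δ, λ) δ`. -/
def twistInv (a : Fin 3 → ℕ) (χ : Lt a →ₗ[ℤ] Lt a →ₗ[ℤ] ℤ) (x : Lt a) : Lt a :=
  x + χ (delta a) x • delta a

/-- The simple reflections `r_{α_v}`, viewed as the set of `ℤ`-linear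
automorphisms of `L̃` whose underlying function is `reflect a (gen a v)`. -/
def weylGens (a : Fin 3 → ℕ) : Set (Lt a ≃ₗ[ℤ] Lt a) :=
  { g | ∃ v : Vt a, ∀ x : Lt a, g x = reflect a (gen a v) x }

/-- The affine Weyl group `W̃_A`, generated by the simple reflections. -/
def weyl (a : Fin 3 → ℕ) : Subgroup (Lt a ≃ₗ[ℤ] Lt a) := Subgroup.closure (weylGens a)

/-- The set of real roots `Δ̃_re = {w(α_v) : w ∈ W̃_A, v ∈ Ṽ_A}`. -/
def realRoots (a : Fin 3 → ℕ) : Set (Lt a) :=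
  { x | ∃ w ∈ weyl a, ∃ v : Vt a, x = w (gen a v) }

/-- The extended affine Weyl group `W̃_A^ext`, generated by `W̃_A` and `t_δ`. -/
def extWeyl (a : Fin 3 → ℕ) (χ : Lt a →ₗ[ℤ] Lt a →ₗ[ℤ] ℤ) :
    Subgroup (Lt a ≃ₗ[ℤ] Lt a) :=
  Subgroup.closure (weylGens a ∪ { g | ∀ x : Lt a, g x = twist a χ x })

section Lemmas
variable (a : Fin 3 → ℕ)

lemma cartan_symm (u v : Vt a) : cartan a u v = cartan a v u := by
  cases u <;> cases v <;> simp only [cartan]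
  rename_i i j i' j'
  by_cases hii : i = i'
  · subst hii
    simp only [eq_self_iff_true, true_and]
    split_ifs <;> omega
  · have hii' : ¬ i' = i := fun h => hii h.symm
    simp [hii, hii']

lemma cartan_self (v : Vt a) : cartan a v v = 2 := by
  cases v <;> simp [cartan]

lemma Iform_gen_left (v : Vt a) (y : Lt a) :
    Iform a (gen a v) y = y.sum fun w c => c * cartan a v w := by
  unfold Iform gen
  rw [Finsupp.sum_single_index]
  · simp [one_mul]
  · simp

lemma Iform_gen_gen (u v : Vt a) : Iform a (gen a u) (gen a v) = cartan a u v := by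
  rw [Iform_gen_left]
  unfold gen
  rw [Finsupp.sum_single_index] <;> simp

lemma Iform_symm (x y : Lt a) : Iform a x y = Iform a y x := by
  unfold Iform
  rw [Finsupp.sum_comm]
  refine Finsupp.sum_congr fun u _ => Finsupp.sum_congr fun v _ => ?_
  rw [cartan_symm]; ring

lemma Iform_add_right (x y z : Lt a) :
    Iform a x (y + z) = Iform a x y + Iform a x z := by
  unfold Iform
  rw [← Finsupp.sum_add]
  refine Finsupp.sum_congr fun u _ => ?_
  rw [Finsupp.sum_add_index] <;> intros <;> ring

lemma Iform_smul_right (n : ℤ) (x y : Lt a) :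
    Iform a x (n • y) = n * Iform a x y := by
  unfold Iform
  rw [Finsupp.mul_sum]
  refine Finsupp.sum_congr fun u _ => ?_
  rw [Finsupp.sum_smul_index (by intros; ring), Finsupp.mul_sum]
  refine Finsupp.sum_congr fun v _ => by ring

lemma Iform_add_left (x y z : Lt a) :
    Iform a (x + y) z = Iform a x z + Iform a y z := by
  rw [Iform_symm, Iform_add_right, Iform_symm a z, Iform_symm a z]

lemma Iform_smul_left (n : ℤ) (x y : Lt a) :
    Iform a (n • x) y = n * Iform a x y := by
  rw [Iform_symm, Iform_smul_right, Iform_symm]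

lemma Iform_sub_right (x y z : Lt a) :
    Iform a x (y - z) = Iform a x y - Iform a x z := by
  have := Iform_add_right a x (y - z) z
  simp at this; omega

lemma Iform_sub_left (x y z : Lt a) :
    Iform a (x - y) z = Iform a x z - Iform a y z := by
  rw [Iform_symm, Iform_sub_right, Iform_symm a z, Iform_symm a z]

lemma Iform_delta_right (x : Lt a) : Iform a x (delta a) = 0 := by
  rw [Iform_symm]
  unfold delta
  rw [Iform_sub_left, Iform_gen_left, Iform_gen_left, ← Finsupp.sum_sub]
  refine Finset.sum_eq_zero fun w _ => ?_
  have h : cartan a Vt.star w = cartan a Vt.one w := by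
    cases w <;> simp [cartan]
  show x w * cartan a Vt.star w - x w * cartan a Vt.one w = 0
  rw [h]; ring

lemma Iform_delta_left (x : Lt a) : Iform a (delta a) x = 0 := by
  rw [Iform_symm, Iform_delta_right]

end Lemmas
section Lemmas2
variable (a : Fin 3 → ℕ)

lemma reflect_apply (α x : Lt a) : reflect a α x = x - Iform a α x • α := rfl

lemma reflect_invol {α : Lt a} (hα : Iform a α α = 2) (x : Lt a) :
    reflect a α (reflect a α x) = x := by
  simp only [reflect_apply, Iform_sub_right, Iform_smul_right, hα]
  module

/-- The reflection along `α` as a linear equivalence. -/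
def reflEquiv (α : Lt a) (hα : Iform a α α = 2) : Lt a ≃ₗ[ℤ] Lt a where
  toFun := reflect a α
  invFun := reflect a α
  left_inv := reflect_invol a hα
  right_inv := reflect_invol a hα
  map_add' x y := by
    simp only [reflect_apply, Iform_add_right]
    module
  map_smul' n x := by
    simp only [reflect_apply, Iform_smul_right, RingHom.id_apply]
    module

@[simp] lemma reflEquiv_apply (α : Lt a) (hα : Iform a α α = 2) (x : Lt a) :
    reflEquiv a α hα x = reflect a α x := rfl

/-- The simple reflection at vertex `v`. -/
def sRefl (v : Vt a) : Lt a ≃ₗ[ℤ] Lt a :=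
  reflEquiv a (gen a v) (by rw [Iform_gen_gen, cartan_self])

@[simp] lemma sRefl_apply (v : Vt a) (x : Lt a) :
    sRefl a v x = x - Iform a (gen a v) x • gen a v := rfl

lemma sRefl_mem (v : Vt a) : sRefl a v ∈ weyl a :=
  Subgroup.subset_closure ⟨v, fun _ => rfl⟩

lemma reflect_preserves {α : Lt a} (hα : Iform a α α = 2) (x y : Lt a) :
    Iform a (reflect a α x) (reflect a α y) = Iform a x y := by
  simp only [reflect_apply, Iform_sub_left, Iform_sub_right, Iform_smul_left,
    Iform_smul_right, hα]
  have h := Iform_symm a α x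
  ring_nf
  rw [Iform_symm a x α]
  ring

lemma mulApply (f g : Lt a ≃ₗ[ℤ] Lt a) (x : Lt a) : (f * g) x = f (g x) := rfl

lemma invApply (f : Lt a ≃ₗ[ℤ] Lt a) (x : Lt a) : (f⁻¹) x = f.symm x := rfl

lemma weyl_fixes_delta {w : Lt a ≃ₗ[ℤ] Lt a} (hw : w ∈ weyl a) :
    w (delta a) = delta a := by
  induction hw using Subgroup.closure_induction with
  | mem g hg =>
    obtain ⟨v, hv⟩ := hg
    rw [hv, reflect_apply, Iform_delta_right, zero_smul, sub_zero]
  | one => rfl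
  | mul g h _ _ hg hh => rw [mulApply, hh, hg]
  | inv g _ hg =>
    rw [invApply]
    conv_lhs => rw [← hg]
    exact g.symm_apply_apply _

lemma weyl_preserves {w : Lt a ≃ₗ[ℤ] Lt a} (hw : w ∈ weyl a) (x y : Lt a) :
    Iform a (w x) (w y) = Iform a x y := by
  induction hw using Subgroup.closure_induction generalizing x y with
  | mem g hg =>
    obtain ⟨v, hv⟩ := hg
    rw [hv, hv]
    exact reflect_preserves a (by rw [Iform_gen_gen, cartan_self]) x y
  | one => rfl
  | mul g h _ _ hg hh => rw [mulApply, mulApply, hg, hh]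
  | inv g _ hg =>
    have h2 := hg (g.symm x) (g.symm y)
    rw [g.apply_symm_apply, g.apply_symm_apply] at h2
    rw [invApply, invApply, ← h2]

lemma realRoots_apply {w : Lt a ≃ₗ[ℤ] Lt a} (hw : w ∈ weyl a) {x : Lt a}
    (hx : x ∈ realRoots a) : w x ∈ realRoots a := by
  obtain ⟨u, hu, v, rfl⟩ := hx
  exact ⟨w * u, mul_mem hw hu, v, rfl⟩

lemma reflect_real_mem {β x : Lt a} (hβ : β ∈ realRoots a) (hx : x ∈ realRoots a) :
    reflect a β x ∈ realRoots a := by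
  obtain ⟨w, hw, v, rfl⟩ := hβ
  have h1 : Iform a (gen a v) (w.symm x) = Iform a (w (gen a v)) x := by
    have := weyl_preserves a hw (gen a v) (w.symm x)
    rw [w.apply_symm_apply] at this
    exact this.symm
  have key : reflect a (w (gen a v)) x = (w * sRefl a v * w⁻¹) x := by
    rw [mulApply, mulApply, invApply, sRefl_apply, map_sub, map_smul,
      w.apply_symm_apply, h1, reflect_apply]
  rw [key]
  exact realRoots_apply a (mul_mem (mul_mem hw (sRefl_mem a v)) (inv_mem hw)) hx

end Lemmas2
section Lemmas3
variable (a : Fin 3 → ℕ)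

/-- The translation element `T = r_{α_{𝟙*}} r_{α_𝟙}`, satisfying
`T x = x + Ĩ(α_𝟙, x) δ`. -/
def trT : Lt a ≃ₗ[ℤ] Lt a := sRefl a Vt.star * sRefl a Vt.one

lemma trT_mem : trT a ∈ weyl a := mul_mem (sRefl_mem a _) (sRefl_mem a _)

lemma Iform_one_star : Iform a (gen a Vt.one) (gen a Vt.star) = 2 := by
  rw [Iform_gen_gen]; rfl

lemma Iform_star_one : Iform a (gen a Vt.star) (gen a Vt.one) = 2 := by
  rw [Iform_gen_gen]; rfl

lemma star_eq_one_add_delta : gen a Vt.star = gen a Vt.one + delta a := by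
  unfold delta; module

lemma trT_apply (x : Lt a) :
    trT a x = x + Iform a (gen a Vt.one) x • delta a := by
  rw [trT, mulApply, sRefl_apply, sRefl_apply, Iform_sub_right, Iform_smul_right,
    Iform_star_one]
  have hsd : Iform a (gen a Vt.star) x = Iform a (gen a Vt.one) x := by
    have h := Iform_sub_left a (gen a Vt.star) (gen a Vt.one) x
    rw [show gen a Vt.star - gen a Vt.one = delta a from rfl, Iform_delta_left] at h
    omega
  rw [hsd, star_eq_one_add_delta]
  module

lemma trT_symm_apply (x : Lt a) :
    (trT a).symm x = x - Iform a (gen a Vt.one) x • delta a := by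
  apply (trT a).injective
  rw [(trT a).apply_symm_apply, trT_apply, Iform_sub_right, Iform_smul_right,
    Iform_delta_right]
  module

lemma trT_zpow_apply (k : ℤ) (x : Lt a) :
    ((trT a) ^ k) x = x + (k * Iform a (gen a Vt.one) x) • delta a := by
  induction k using Int.induction_on generalizing x with
  | zero => simp
  | succ m ih =>
    have h : (trT a) ^ ((m : ℤ) + 1) = (trT a) ^ (m : ℤ) * trT a := by
      rw [← zpow_add_one]
    rw [h, mulApply, trT_apply, ih, Iform_add_right, Iform_smul_right,
      Iform_delta_right]
    module
  | pred m ih =>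
    have h : (trT a) ^ (-(m : ℤ) - 1) = (trT a) ^ (-(m : ℤ)) * (trT a)⁻¹ := by
      rw [← zpow_sub_one]
    rw [h, mulApply, invApply, trT_symm_apply, ih, Iform_sub_right, Iform_smul_right,
      Iform_delta_right]
    module

/-- Translation lemma: a real root pairing to `-1` with `α_𝟙` can be translated
by any multiple of `δ`. -/
lemma real_translate {β : Lt a} (hβ : β ∈ realRoots a)
    (hp : Iform a (gen a Vt.one) β = -1) (n : ℤ) : β + n • delta a ∈ realRoots a := by
  have h := realRoots_apply a (Subgroup.zpow_mem _ (trT_mem a) (-n)) hβ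
  rw [trT_zpow_apply, hp] at h
  simpa using h

lemma gen_mem (v : Vt a) : gen a v ∈ realRoots a := ⟨1, one_mem _, v, rfl⟩

lemma gen_one_add (n : ℤ) : gen a Vt.one + n • delta a ∈ realRoots a := by
  rcases Int.even_or_odd n with ⟨m, hm⟩ | ⟨m, hm⟩
  · -- even: T^m (α_one) = α_one + 2m δ
    have h := realRoots_apply a (Subgroup.zpow_mem _ (trT_mem a) m) (gen_mem a Vt.one)
    rw [trT_zpow_apply, Iform_gen_gen, cartan_self] at h
    have : n • delta a = (m * 2) • delta a := by rw [hm]; module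
    rw [this]
    exact h
  · -- odd: s ∘ T^k ∘ t applied to α_star, with k = 1 - m, gives α_one + (2m+1) δ
    have h0 := realRoots_apply a (sRefl_mem a Vt.one) (gen_mem a Vt.star)
    rw [sRefl_apply, Iform_one_star] at h0
    have h1 := realRoots_apply a (Subgroup.zpow_mem _ (trT_mem a) (1 - m)) h0
    rw [trT_zpow_apply] at h1
    have e1 : Iform a (gen a Vt.one) (gen a Vt.star - (2:ℤ) • gen a Vt.one) = -2 := by
      rw [Iform_sub_right, Iform_smul_right, Iform_one_star, Iform_gen_gen, cartan_self]
      ring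
    rw [e1] at h1
    have h2 := realRoots_apply a (sRefl_mem a Vt.star) h1
    rw [sRefl_apply] at h2
    have e2 : Iform a (gen a Vt.star)
        (gen a Vt.star - (2:ℤ) • gen a Vt.one + ((1 - m) * -2) • delta a) = -2 := by
      rw [Iform_add_right, Iform_smul_right, Iform_delta_right, Iform_sub_right,
        Iform_smul_right, Iform_star_one, Iform_gen_gen, cartan_self]
      ring
    rw [e2] at h2
    have e3 : gen a Vt.star - (2:ℤ) • gen a Vt.one + ((1 - m) * -2) • delta a -
        (-2 : ℤ) • gen a Vt.star = gen a Vt.one + n • delta a := by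
      rw [hm, star_eq_one_add_delta]
      module
    rw [e3] at h2
    exact h2

lemma gen_star_add (n : ℤ) : gen a Vt.star + n • delta a ∈ realRoots a := by
  have h := gen_one_add a (n + 1)
  have : gen a Vt.one + (n + 1) • delta a = gen a Vt.star + n • delta a := by
    rw [star_eq_one_add_delta]; module
  rwa [this] at h

end Lemmas3
section Lemmas4
variable (a : Fin 3 → ℕ)

lemma branch_key (i : Fin 3) : ∀ j (hj : j < a i - 1),
    ∃ γ : Lt a, γ ∈ realRoots a ∧
      Iform a (gen a Vt.one) γ = -1 ∧
      (∀ m (hm : m < a i - 1), j < m →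
        Iform a (gen a (Vt.br i ⟨m, hm⟩)) γ = if m = j + 1 then -1 else 0) ∧
      Iform a γ γ = 2 ∧
      (∀ n : ℤ, gen a (Vt.br i ⟨j, hj⟩) + n • delta a ∈ realRoots a) := by
  intro j
  induction j with
  | zero =>
    intro hj
    refine ⟨gen a (Vt.br i ⟨0, hj⟩), gen_mem a _, ?_, ?_, ?_, ?_⟩
    · rw [Iform_gen_gen]; simp [cartan]
    · intro m hm hm0
      rw [Iform_gen_gen]
      simp only [cartan, Fin.val_mk, eq_self_iff_true, true_and]
      split_ifs <;> first | omega | tauto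
    · rw [Iform_gen_gen, cartan_self]
    · intro n
      exact real_translate a (gen_mem a _) (by rw [Iform_gen_gen]; simp [cartan]) n
  | succ j ih =>
    intro hj1
    have hj : j < a i - 1 := by omega
    obtain ⟨γ, hγ, hone, hpair, hnorm, _⟩ := ih hj
    set g : Lt a := gen a (Vt.br i ⟨j + 1, hj1⟩) with hg
    have hgγ : Iform a g γ = -1 := by
      have := hpair (j + 1) hj1 (by omega)
      simpa using this
    set γ' : Lt a := γ + g with hγ'
    have hγ'mem : γ' ∈ realRoots a := by
      have h := reflect_real_mem a (gen_mem a (Vt.br i ⟨j + 1, hj1⟩)) hγ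
      rw [reflect_apply, hgγ] at h
      have : γ - (-1 : ℤ) • g = γ' := by rw [hγ']; module
      rwa [this] at h
    have honeγ' : Iform a (gen a Vt.one) γ' = -1 := by
      rw [hγ', Iform_add_right, hone, hg, Iform_gen_gen]
      simp [cartan]
    have hγg : Iform a γ g = -1 := by rw [Iform_symm]; exact hgγ
    have hnorm' : Iform a γ' γ' = 2 := by
      rw [hγ', Iform_add_right, Iform_add_left, Iform_add_left, hnorm, hγg, hgγ,
        hg, Iform_gen_gen, cartan_self]
      ring
    refine ⟨γ', hγ'mem, honeγ', ?_, hnorm', ?_⟩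
    · intro m hm hmlt
      rw [hγ', Iform_add_right]
      have h1 : Iform a (gen a (Vt.br i ⟨m, hm⟩)) γ = 0 := by
        have := hpair m hm (by omega)
        rw [this, if_neg (by omega)]
      have h2 : Iform a (gen a (Vt.br i ⟨m, hm⟩)) g =
          if m = j + 1 + 1 then -1 else 0 := by
        rw [hg, Iform_gen_gen]
        simp only [cartan, Fin.val_mk, eq_self_iff_true, true_and]
        split_ifs <;> omega
      rw [h1, h2, zero_add]
    · intro n
      have htr := real_translate a hγ'mem honeγ' n
      have hmem := reflect_real_mem a hγ htr
      have hcalc : Iform a γ (γ' + n • delta a) = 1 := by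
        rw [Iform_add_right, Iform_smul_right, Iform_delta_right, hγ',
          Iform_add_right, hnorm, hγg]
        ring
      rw [reflect_apply, hcalc] at hmem
      have : γ' + n • delta a - (1 : ℤ) • γ = gen a (Vt.br i ⟨j + 1, hj1⟩) + n • delta a := by
        rw [hγ', hg]; module
      rwa [this] at hmem

lemma gen_add_delta (v : Vt a) (n : ℤ) : gen a v + n • delta a ∈ realRoots a := by
  cases v with
  | star => exact gen_star_add a n
  | one => exact gen_one_add a n
  | br i j =>
    obtain ⟨_, _, _, _, _, h⟩ := branch_key a i j.val j.isLt
    have := h n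
    simpa using this

end Lemmas4
/-- **Real roots are stable under translation by `δ`** (equation (3.2) of the
paper): for every `α ∈ Δ̃_re` and every `n ∈ ℤ`, `α + nδ ∈ Δ̃_re`, where
`Δ̃_re = {w(α_v) : w ∈ W̃_A, v ∈ Ṽ_A}`. -/
theorem realRoots_add_delta (a : Fin 3 → ℕ) (ha : ∀ i, 0 < a i)
    (hA : 1 < (a 0 : ℚ)⁻¹ + (a 1 : ℚ)⁻¹ + (a 2 : ℚ)⁻¹) :
    ∀ α ∈ realRoots a, ∀ n : ℤ, α + n • delta a ∈ realRoots a := by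
  rintro α ⟨w, hw, v, rfl⟩ n
  obtain ⟨u, hu, v', h⟩ := gen_add_delta a v n
  refine ⟨w * u, mul_mem hw hu, v', ?_⟩
  rw [mulApply, ← h, map_add, map_smul, weyl_fixes_delta a hw]

end
end AffineGRS
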